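/- (Halpern) Let ξ_k = k^{−1/2} and q_k = (cos ξ_k, sin ξ_k) on the unit circle S¹ ⊂ ℝ². Suppose that at each point q_k a unit vector w_k is assigned, and let σ_k be the oriented angle measured counterclockwise from z_k = −q_k to w_k. If |σ_k| = b_k k^{−5/2} with b_k → b > 0 as k → ∞, then there exist an integer k₀ > 0 and a 2π-periodic, positive, C²-smooth function ρ : ℝ → ℝ such that the closed curve γ(ξ) = ρ(ξ)(cos ξ, sin ξ) is C²-smooth with everywhere positive curvature (hence strictly convex), ρ(ξ_k) = 1 for every k ≥ k₀ (so γ passes through q_k), and the inward unit normal of γ at the point q_k equals w_k for every k ≥ k₀. -/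

import Mathlib

open Real Filter

set_option linter.unusedSectionVars false
set_option linter.unusedTactic false

noncomputable section
namespace Halpern13



/-- Smooth "tilted bump": equals `x` near `0`, vanishes for `|x| ≥ 3/4`. -/
def g (x : ℝ) : ℝ := x * Real.smoothTransition (2 - 4 * x ^ 2)

def g1 : ℝ → ℝ := deriv g

def g2 : ℝ → ℝ := deriv g1

theorem contDiff_g : ContDiff ℝ (⊤ : ℕ∞) g :=
  contDiff_id.mul (Real.smoothTransition.contDiff.comp
    ((contDiff_const.sub ((contDiff_const).mul (contDiff_id.pow 2)))))

theorem differentiable_g : Differentiable ℝ g :=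
  (contDiff_infty_iff_deriv.1 contDiff_g).1

theorem contDiff_g1 : ContDiff ℝ (⊤ : ℕ∞) g1 :=
  (contDiff_infty_iff_deriv.1 contDiff_g).2

theorem differentiable_g1 : Differentiable ℝ g1 :=
  (contDiff_infty_iff_deriv.1 contDiff_g1).1

theorem continuous_g2 : Continuous g2 :=
  (contDiff_infty_iff_deriv.1 contDiff_g1).2.continuous

theorem continuous_g1 : Continuous g1 := contDiff_g1.continuous

theorem hasDerivAt_g (x : ℝ) : HasDerivAt g (g1 x) x :=
  (differentiable_g x).hasDerivAt

theorem hasDerivAt_g1 (x : ℝ) : HasDerivAt g1 (g2 x) x :=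
  (differentiable_g1 x).hasDerivAt

theorem g_eq_id {x : ℝ} (hx : |x| ≤ 1/2) : g x = x := by
  have h : (1:ℝ) ≤ 2 - 4 * x ^ 2 := by
    have := abs_le.1 hx
    nlinarith [this.1, this.2]
  simp [g, Real.smoothTransition.one_of_one_le h]

theorem g_eq_zero {x : ℝ} (hx : (3:ℝ)/4 ≤ |x|) : g x = 0 := by
  have h : 2 - 4 * x ^ 2 ≤ 0 := by nlinarith [sq_abs x, hx]
  simp [g, Real.smoothTransition.zero_of_nonpos h]

theorem g_ev_zero {x : ℝ} (hx : (3:ℝ)/4 < |x|) : g =ᶠ[nhds x] (fun _ => 0) := by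
  have hball : Metric.ball x (|x| - 3/4) ∈ nhds x := Metric.ball_mem_nhds x (by linarith)
  filter_upwards [hball] with y hy
  have h1 : |y - x| < |x| - 3/4 := by simpa [Real.dist_eq] using hy
  have h2 : (3:ℝ)/4 ≤ |y| := by
    have := abs_sub_abs_le_abs_sub x y
    have h3 : |x - y| = |y - x| := abs_sub_comm x y
    linarith
  exact g_eq_zero h2

theorem g1_eq_zero {x : ℝ} (hx : (3:ℝ)/4 < |x|) : g1 x = 0 := by
  have h := (g_ev_zero hx).deriv_eq
  simpa [g1] using h

theorem g1_ev_zero {x : ℝ} (hx : (7:ℝ)/8 ≤ |x|) : g1 =ᶠ[nhds x] (fun _ => 0) := by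
  have hball : Metric.ball x (1/16 : ℝ) ∈ nhds x := Metric.ball_mem_nhds x (by norm_num)
  filter_upwards [hball] with y hy
  have h1 : |y - x| < 1/16 := by simpa [Real.dist_eq] using hy
  have h2 : (3:ℝ)/4 < |y| := by
    have := abs_sub_abs_le_abs_sub x y
    have h3 : |x - y| = |y - x| := abs_sub_comm x y
    linarith
  exact g1_eq_zero h2

theorem g2_eq_zero {x : ℝ} (hx : (7:ℝ)/8 ≤ |x|) : g2 x = 0 := by
  have h := (g1_ev_zero hx).deriv_eq
  simpa [g2] using h

theorem g_zero_of_one_le {x : ℝ} (hx : (1:ℝ) ≤ |x|) :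
    g x = 0 ∧ g1 x = 0 ∧ g2 x = 0 :=
  ⟨g_eq_zero (by linarith), g1_eq_zero (by linarith), g2_eq_zero (by linarith)⟩

theorem g_zero : g 0 = 0 := by simp [g]

theorem g1_zero : g1 0 = 1 := by
  have h2 : g =ᶠ[nhds 0] id := by
    have : Metric.ball (0:ℝ) (1/2) ∈ nhds (0:ℝ) := Metric.ball_mem_nhds _ (by norm_num)
    filter_upwards [this] with y hy
    exact g_eq_id (le_of_lt (by simpa [Real.dist_eq] using hy))
  have := h2.deriv_eq
  simpa [g1] using this

theorem exists_bound : ∃ C : ℝ, 1 ≤ C ∧ ∀ x, |g x| ≤ C ∧ |g1 x| ≤ C ∧ |g2 x| ≤ C := by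
  obtain ⟨C0, hC0⟩ := (isCompact_Icc (a := (-1:ℝ)) (b := 1)).exists_bound_of_continuousOn
    contDiff_g.continuous.continuousOn
  obtain ⟨C1, hC1⟩ := (isCompact_Icc (a := (-1:ℝ)) (b := 1)).exists_bound_of_continuousOn
    continuous_g1.continuousOn
  obtain ⟨C2, hC2⟩ := (isCompact_Icc (a := (-1:ℝ)) (b := 1)).exists_bound_of_continuousOn
    continuous_g2.continuousOn
  refine ⟨max (max (max C0 C1) C2) 1, le_max_right _ _, fun x => ?_⟩
  by_cases hx : |x| ≤ 1
  · have hmem : x ∈ Set.Icc (-1:ℝ) 1 := by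
      rcases abs_le.1 hx with ⟨h1, h2⟩; exact ⟨h1, h2⟩
    refine ⟨?_, ?_, ?_⟩
    · calc |g x| ≤ C0 := by simpa [Real.norm_eq_abs] using hC0 x hmem
        _ ≤ _ := by
          refine le_max_of_le_left (le_max_of_le_left (le_max_left _ _))
    · calc |g1 x| ≤ C1 := by simpa [Real.norm_eq_abs] using hC1 x hmem
        _ ≤ _ := le_max_of_le_left (le_max_of_le_left (le_max_right _ _))
    · calc |g2 x| ≤ C2 := by simpa [Real.norm_eq_abs] using hC2 x hmem
        _ ≤ _ := le_max_of_le_left (le_max_right _ _)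
  · push_neg at hx
    obtain ⟨h0, h1, h2⟩ := g_zero_of_one_le hx.le
    rw [h0, h1, h2]
    have : (0:ℝ) ≤ max (max (max C0 C1) C2) 1 := le_trans zero_le_one (le_max_right _ _)
    simp [this]



def xi (k : ℕ) : ℝ := (Real.sqrt k)⁻¹
def hh (k : ℕ) : ℝ := (xi k)^3 / 100
def nn (t : ℝ) : ℕ := ⌊(t^2)⁻¹ + 1/2⌋₊

theorem xi_pos {k : ℕ} (hk : 1 ≤ k) : 0 < xi k := by
  have : (0:ℝ) < Real.sqrt k := Real.sqrt_pos.2 (by exact_mod_cast Nat.pos_of_ne_zero (by omega))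
  exact inv_pos.2 this

theorem xi_sq {k : ℕ} (hk : 1 ≤ k) : (k:ℝ) * (xi k)^2 = 1 := by
  have hk0 : (0:ℝ) ≤ k := Nat.cast_nonneg k
  have h : Real.sqrt k ^ 2 = (k:ℝ) := Real.sq_sqrt hk0
  have hne : (k:ℝ) ≠ 0 := by exact_mod_cast (Nat.pos_of_ne_zero (by omega)).ne'
  rw [xi, inv_pow, h]; field_simp
  try rw [h]

theorem xi_le_one {k : ℕ} (hk : 1 ≤ k) : xi k ≤ 1 := by
  have h1 : (1:ℝ) ≤ Real.sqrt k := by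
    rw [show (1:ℝ) = Real.sqrt 1 by simp]
    exact Real.sqrt_le_sqrt (by exact_mod_cast hk)
  rw [xi]
  exact inv_le_one_of_one_le₀ h1

theorem hh_pos {k : ℕ} (hk : 1 ≤ k) : 0 < hh k := by
  have := xi_pos hk; rw [hh]; positivity

theorem hh_lt_xi {k : ℕ} (hk : 1 ≤ k) : hh k < xi k := by
  have h1 := xi_pos hk
  have h2 := xi_le_one hk
  have hx2 : xi k ^ 2 ≤ 1 := by nlinarith
  have h3 : xi k ^ 3 ≤ xi k := by nlinarith [mul_nonneg h1.le (sub_nonneg.2 hx2)]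
  rw [hh]; linarith

/-- Core estimate: inside (a slight enlargement of) the `k`-th bump, `(t²)⁻¹` lies strictly
between `k - 1/2` and `k + 1/2`. -/
theorem inv_sq_mem {k : ℕ} (hk : 1 ≤ k) {t : ℝ} (ht : |t - xi k| ≤ hh k) :
    (k:ℝ) - 1/2 < (t^2)⁻¹ ∧ (t^2)⁻¹ < (k:ℝ) + 1/2 := by
  set x := xi k with hx
  have hxpos := xi_pos hk
  have hxle := xi_le_one hk
  have hsq := xi_sq hk
  rw [← hx] at hxpos hxle hsq
  have hk1 : (1:ℝ) ≤ (k:ℝ) := by exact_mod_cast hk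
  obtain ⟨hl, hr⟩ := abs_le.1 ht
  have hhh : hh k = x^3/100 := rfl
  rw [hhh] at hl hr
  have htl : x - x^3/100 ≤ t := by linarith
  have htr : t ≤ x + x^3/100 := by linarith
  have hx3 : x^3 ≤ x := by nlinarith
  have htpos : 0 < t := by nlinarith
  have ht2 : 0 < t^2 := by positivity
  have e1 : (k:ℝ) * x^4 = x^2 := by
    rw [show (k:ℝ)*x^4 = ((k:ℝ)*x^2)*x^2 by ring, hsq, one_mul]
  have e2 : (k:ℝ) * x^6 = x^4 := by
    rw [show (k:ℝ)*x^6 = ((k:ℝ)*x^2)*x^4 by ring, hsq, one_mul]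
  have hx2le : x^2 ≤ 1 := by nlinarith
  have hx4le : x^4 ≤ x^2 := by nlinarith
  have hx6le : x^6 ≤ x^4 := by nlinarith
  constructor
  · rw [show (t^2)⁻¹ = 1/t^2 by ring, lt_div_iff₀ ht2]
    have h1 : t^2 ≤ (x + x^3/100)^2 := by nlinarith
    have hval : ((k:ℝ) - 1/2) * (x + x^3/100)^2
        = 1 + x^2/50 + x^4/10000 - x^2/2 - x^4/100 - x^6/20000 := by
      linear_combination hsq + e1/50 + e2/10000
    have h2 : ((k:ℝ) - 1/2) * (x + x^3/100)^2 < 1 := by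
      rw [hval]
      have : 0 < x^2 := by positivity
      have h6 : 0 ≤ x^6 := by positivity
      linarith [hx4le]
    have := mul_le_mul_of_nonneg_left h1 (show (0:ℝ) ≤ (k:ℝ)-1/2 by linarith)
    linarith
  · rw [show (t^2)⁻¹ = 1/t^2 by ring, div_lt_iff₀ ht2]
    have h1 : (x - x^3/100)^2 ≤ t^2 := by nlinarith
    have hval : ((k:ℝ) + 1/2) * (x - x^3/100)^2
        = 1 - x^2/50 + x^4/10000 + x^2/2 - x^4/100 + x^6/20000 := by
      linear_combination hsq - e1/50 + e2/10000
    have h2 : (1:ℝ) < ((k:ℝ) + 1/2) * (x - x^3/100)^2 := by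
      rw [hval]
      have : 0 < x^2 := by positivity
      have h6 : 0 ≤ x^6 := by positivity
      linarith [hx4le]
    have := mul_le_mul_of_nonneg_left h1 (show (0:ℝ) ≤ (k:ℝ)+1/2 by linarith)
    linarith

theorem nn_eq {k : ℕ} {t : ℝ} (h1 : (k:ℝ) - 1/2 < (t^2)⁻¹) (h2 : (t^2)⁻¹ < (k:ℝ) + 1/2) :
    nn t = k := by
  rw [nn, Nat.floor_eq_iff]
  constructor
  · linarith
  · push_cast; linarith
  · positivity

theorem nn_xi {k : ℕ} (hk : 1 ≤ k) : nn (xi k) = k := by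
  have h : ((xi k)^2)⁻¹ = (k:ℝ) := by
    have := xi_sq hk
    have hx := xi_pos hk
    field_simp
    linarith [this]
  rw [nn, h, Nat.floor_eq_iff (by positivity)]
  constructor
  · linarith
  · push_cast; linarith

-- ### the interpolating function
def Gv (d : ℕ → ℝ) (k : ℕ) (t : ℝ) : ℝ := d k * hh k * g ((t - xi k) / hh k)
def G1v (d : ℕ → ℝ) (k : ℕ) (t : ℝ) : ℝ := d k * g1 ((t - xi k) / hh k)
def G2v (d : ℕ → ℝ) (k : ℕ) (t : ℝ) : ℝ := d k / hh k * g2 ((t - xi k) / hh k)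
def ff (d : ℕ → ℝ) (t : ℝ) : ℝ := Gv d (nn t) t
def ff1 (d : ℕ → ℝ) (t : ℝ) : ℝ := G1v d (nn t) t
def ff2 (d : ℕ → ℝ) (t : ℝ) : ℝ := G2v d (nn t) t

section main
variable {d : ℕ → ℝ} {k₀ : ℕ}

theorem G_zero {k : ℕ} (h : d k = 0) (t : ℝ) :
    Gv d k t = 0 ∧ G1v d k t = 0 ∧ G2v d k t = 0 := by
  simp [Gv, G1v, G2v, h]

theorem G_far {k : ℕ} (hk : 1 ≤ k) {t : ℝ} (h : hh k ≤ |t - xi k|) :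
    Gv d k t = 0 ∧ G1v d k t = 0 ∧ G2v d k t = 0 := by
  have hhp := hh_pos hk
  have harg : (1:ℝ) ≤ |(t - xi k) / hh k| := by
    rw [abs_div, abs_of_pos hhp, le_div_iff₀ hhp, one_mul]
    exact h
  obtain ⟨h0, h1, h2⟩ := g_zero_of_one_le harg
  simp [Gv, G1v, G2v, h0, h1, h2]

theorem hasDerivAt_Gv (hd0 : ∀ k, d k ≠ 0 → k₀ ≤ k) (hk₀ : 2 ≤ k₀) (k : ℕ) (t : ℝ) :
    HasDerivAt (Gv d k) (G1v d k t) t ∧ HasDerivAt (G1v d k) (G2v d k t) t ∧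
      Continuous (G2v d k) := by
  by_cases h : d k = 0
  · have e0 : Gv d k = fun _ => (0:ℝ) := funext fun t => by simp [Gv, h]
    have e1 : G1v d k = fun _ => (0:ℝ) := funext fun t => by simp [G1v, h]
    have e2 : G2v d k = fun _ => (0:ℝ) := funext fun t => by simp [G2v, h]
    refine ⟨?_, ?_, ?_⟩
    · rw [e0]; simpa [e1] using hasDerivAt_const t (0:ℝ)
    · rw [e1]; simpa [e2] using hasDerivAt_const t (0:ℝ)
    · rw [e2]; exact continuous_const
  · have hk1 : 1 ≤ k := le_trans (by omega) (hd0 k h)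
    have hhp := hh_pos hk1
    have hinner : HasDerivAt (fun t : ℝ => (t - xi k) / hh k) (1 / hh k) t := by
      simpa using ((hasDerivAt_id t).sub_const (xi k)).div_const (hh k)
    refine ⟨?_, ?_, ?_⟩
    · have := ((hasDerivAt_g ((t - xi k) / hh k)).comp t hinner).const_mul (d k * hh k)
      refine this.congr_deriv ?_
      rw [G1v]; field_simp [hhp.ne']
      try ring
    · have := ((hasDerivAt_g1 ((t - xi k) / hh k)).comp t hinner).const_mul (d k)
      refine this.congr_deriv ?_
      rw [G2v]; field_simp [hhp.ne']
      try ring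
    · apply continuous_const.mul
      exact continuous_g2.comp (by continuity)

theorem ff_zero_of_nonpos (hd0 : ∀ k, d k ≠ 0 → k₀ ≤ k) (hk₀ : 2 ≤ k₀) {t : ℝ} (ht : t ≤ 0) :
    ff d t = 0 ∧ ff1 d t = 0 ∧ ff2 d t = 0 := by
  set k := nn t
  by_cases h : d k = 0
  · exact G_zero h t
  · have hk1 : 1 ≤ k := le_trans (by omega) (hd0 k h)
    refine G_far hk1 ?_
    have := xi_pos hk1
    have := hh_lt_xi hk1
    rw [abs_sub_comm, abs_of_pos (by linarith)]
    linarith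

theorem nn_le_one_of_one_le {t : ℝ} (ht : (1:ℝ) ≤ t) : nn t ≤ 1 := by
  have h2 : (t^2)⁻¹ ≤ 1 := by
    rw [inv_le_one_iff₀]
    right; nlinarith
  have h4 : (t^2)⁻¹ + 1/2 < 2 := by linarith
  have h5 : nn t < 2 := by
    rw [nn]
    apply (Nat.floor_lt (by positivity)).2
    push_cast
    linarith
  omega

theorem ff_zero_of_one_le (hd0 : ∀ k, d k ≠ 0 → k₀ ≤ k) (hk₀ : 2 ≤ k₀) {t : ℝ} (ht : (1:ℝ) ≤ t) :
    ff d t = 0 ∧ ff1 d t = 0 ∧ ff2 d t = 0 := by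
  have h : d (nn t) = 0 := by
    by_contra h
    have := hd0 _ h
    have := nn_le_one_of_one_le ht
    omega
  exact G_zero h t

theorem ff_zero_at_zero (hd0 : ∀ k, d k ≠ 0 → k₀ ≤ k) (hk₀ : 2 ≤ k₀) :
    ff d 0 = 0 ∧ ff1 d 0 = 0 ∧ ff2 d 0 = 0 :=
  ff_zero_of_nonpos hd0 hk₀ le_rfl

/-- local model: near any `s ≠ 0`, the function `ff` coincides with the single
smooth bump `Gv d (nn s)`. -/
theorem model (hd0 : ∀ k, d k ≠ 0 → k₀ ≤ k) (hk₀ : 2 ≤ k₀) {s : ℝ} (hs : s ≠ 0) :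
    ∀ᶠ t in nhds s, ff d t = Gv d (nn s) t ∧ ff1 d t = G1v d (nn s) t ∧
      ff2 d t = G2v d (nn s) t := by
  set k := nn s with hk
  have hv : 0 < (s^2)⁻¹ := by positivity
  have hfl : (k:ℝ) ≤ (s^2)⁻¹ + 1/2 := Nat.floor_le (by positivity)
  have hfr : (s^2)⁻¹ + 1/2 < (k:ℝ) + 1 := by
    have h := Nat.lt_floor_add_one ((s^2)⁻¹ + 1/2)
    have he : (⌊(s^2)⁻¹ + 1/2⌋₊ : ℝ) = (k : ℝ) := by rw [hk]; rfl
    rw [he] at h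
    linarith
  have cont : ContinuousAt (fun t : ℝ => (t^2)⁻¹) s :=
    ((continuous_pow 2).continuousAt).inv₀ (pow_ne_zero 2 hs)
  rcases lt_or_eq_of_le (show (k:ℝ) - 1/2 ≤ (s^2)⁻¹ by linarith) with hlt | heq
  · have hmem : Set.Ioo ((k:ℝ) - 1/2) ((k:ℝ) + 1/2) ∈ nhds ((s^2)⁻¹) :=
      Ioo_mem_nhds hlt (by linarith)
    filter_upwards [cont.preimage_mem_nhds hmem] with t ht
    have : nn t = k := nn_eq ht.1 ht.2
    rw [ff, ff1, ff2, this]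
    exact ⟨rfl, rfl, rfl⟩
  · -- boundary case : (s²)⁻¹ = k - 1/2
    have hk1 : 1 ≤ k := by
      by_contra h
      have : k = 0 := by omega
      rw [this] at heq
      push_cast at heq
      linarith
    have E1 : ∀ᶠ t in nhds s, (t^2)⁻¹ ∈ Set.Ioo ((k:ℝ) - 3/2) ((k:ℝ) + 1/2) := by
      apply cont.preimage_mem_nhds
      apply Ioo_mem_nhds <;> [linarith; linarith]
    have gap_k : d k ≠ 0 → hh k < |s - xi k| := by
      intro h
      by_contra hle
      push_neg at hle
      have := (inv_sq_mem hk1 hle).1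
      linarith
    have gap_km : d (k-1) ≠ 0 → hh (k-1) < |s - xi (k-1)| := by
      intro h
      by_contra hle
      push_neg at hle
      have hk1' : 1 ≤ k - 1 := by have := hd0 _ h; omega
      have := (inv_sq_mem hk1' hle).2
      have hcast : ((k-1 : ℕ) : ℝ) = (k:ℝ) - 1 := by
        have : 1 ≤ k := hk1; push_cast [this]; ring
      rw [hcast] at this
      linarith
    have E2 : ∀ᶠ t in nhds s, (d k ≠ 0 → hh k < |t - xi k|) := by
      by_cases h : d k = 0
      · exact Eventually.of_forall fun t h' => absurd h h'
      · have : ContinuousAt (fun t : ℝ => |t - xi k|) s := by fun_prop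
        filter_upwards [this.preimage_mem_nhds (Ioi_mem_nhds (gap_k h))] with t ht
        exact fun _ => ht
    have E3 : ∀ᶠ t in nhds s, (d (k-1) ≠ 0 → hh (k-1) < |t - xi (k-1)|) := by
      by_cases h : d (k-1) = 0
      · exact Eventually.of_forall fun t h' => absurd h h'
      · have : ContinuousAt (fun t : ℝ => |t - xi (k-1)|) s := by fun_prop
        filter_upwards [this.preimage_mem_nhds (Ioi_mem_nhds (gap_km h))] with t ht
        exact fun _ => ht
    filter_upwards [E1, E2, E3] with t h1 h2 h3
    have hnn : nn t = k ∨ nn t = k - 1 := by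
      have hl : k - 1 ≤ nn t := by
        apply Nat.le_floor
        have hcast : ((k-1 : ℕ) : ℝ) = (k:ℝ) - 1 := by push_cast [hk1]; ring
        rw [hcast]
        linarith [h1.1]
      have hr : nn t < k + 1 := by
        apply Nat.floor_lt (by positivity) |>.2
        push_cast
        linarith [h1.2]
      omega
    rcases hnn with h | h
    · rw [ff, ff1, ff2, h]; exact ⟨rfl, rfl, rfl⟩
    · -- both bumps vanish at t
      have Zk : Gv d k t = 0 ∧ G1v d k t = 0 ∧ G2v d k t = 0 := by
        by_cases hdk : d k = 0
        · exact G_zero hdk t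
        · exact G_far hk1 (le_of_lt (h2 hdk))
      have Zkm : Gv d (k-1) t = 0 ∧ G1v d (k-1) t = 0 ∧ G2v d (k-1) t = 0 := by
        by_cases hdk : d (k-1) = 0
        · exact G_zero hdk t
        · exact G_far (by have := hd0 _ hdk; omega) (le_of_lt (h3 hdk))
      rw [ff, ff1, ff2, h]
      rw [Zk.1, Zk.2.1, Zk.2.2, Zkm.1, Zkm.2.1, Zkm.2.2]
      exact ⟨rfl, rfl, rfl⟩

-- ### global bounds
theorem ff_bounds (hd0 : ∀ k, d k ≠ 0 → k₀ ≤ k) (hk₀ : 2 ≤ k₀)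
    {C M : ℝ} (hC1 : 1 ≤ C) (hM : 1 ≤ M)
    (hgC : ∀ x, |g x| ≤ C ∧ |g1 x| ≤ C ∧ |g2 x| ≤ C)
    (hdM : ∀ k, |d k| ≤ M * (xi k)^5)
    (hk₀big : 1000 * C * M ≤ (k₀:ℝ)) (t : ℝ) :
    (|ff d t| ≤ 400*C*M*t^2 ∧ |ff d t| ≤ 1/10) ∧
    (|ff1 d t| ≤ 400*C*M*t^2 ∧ |ff1 d t| ≤ 1/10) ∧
    (|ff2 d t| ≤ 400*C*M*t^2 ∧ |ff2 d t| ≤ 1/10) := by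
  have hCM : (0:ℝ) ≤ 400*C*M*t^2 := by positivity
  set k := nn t with hk
  by_cases h : d k = 0
  · obtain ⟨e0, e1, e2⟩ := G_zero (d := d) h t
    rw [ff, ff1, ff2, ← hk, e0, e1, e2]
    simp only [abs_zero]
    exact ⟨⟨hCM, by norm_num⟩, ⟨hCM, by norm_num⟩, hCM, by norm_num⟩
  · have hkk₀ : k₀ ≤ k := hd0 k h
    have hk1 : 1 ≤ k := by omega
    by_cases harg : hh k ≤ |t - xi k|
    · obtain ⟨e0, e1, e2⟩ := G_far (d := d) hk1 harg
      rw [ff, ff1, ff2, ← hk, e0, e1, e2]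
      simp only [abs_zero]
      exact ⟨⟨hCM, by norm_num⟩, ⟨hCM, by norm_num⟩, hCM, by norm_num⟩
    · push_neg at harg
      set x := xi k with hx
      have hxp : 0 < x := xi_pos hk1
      have hxle : x ≤ 1 := xi_le_one hk1
      have hhp : 0 < hh k := hh_pos hk1
      have hhval : hh k = x^3/100 := rfl
      have hxk : (k:ℝ) * x^2 = 1 := by rw [hx]; exact xi_sq hk1
      have hd := hdM k
      rw [← hx] at hd
      have hkR : (k₀:ℝ) ≤ (k:ℝ) := by exact_mod_cast hkk₀
      clear_value x k
      have hx2le1 : x^2 ≤ 1 := by nlinarith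
      have hx3 : x^3 ≤ x := by nlinarith [mul_nonneg hxp.le (sub_nonneg.2 hx2le1)]
      have hx6 : x^6 ≤ 1 := by nlinarith [sq_nonneg (x^3), sq_nonneg x]
      obtain ⟨hal, har⟩ := abs_lt.1 harg
      have ht1 : x/2 ≤ t := by rw [hhval] at hal; nlinarith
      have hx2t : x^2 ≤ 4*t^2 := by nlinarith
      have hx2k₀ : (k₀:ℝ) * x^2 ≤ 1 := by
        calc (k₀:ℝ) * x^2 ≤ (k:ℝ) * x^2 := mul_le_mul_of_nonneg_right hkR (sq_nonneg x)
          _ = 1 := hxk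
      have hx2small : 1000 * C * M * x^2 ≤ 1 :=
        le_trans (mul_le_mul_of_nonneg_right hk₀big (sq_nonneg x)) hx2k₀
      have hCMx : (0:ℝ) ≤ C * M * x^2 := by positivity
      have hB : C * M * x^2 ≤ 400*C*M*t^2 := by
        calc C * M * x^2 ≤ C * M * (4*t^2) :=
              mul_le_mul_of_nonneg_left hx2t (by positivity)
          _ ≤ 400*C*M*t^2 := by nlinarith [mul_nonneg (mul_nonneg (by linarith : (0:ℝ) ≤ C) (by linarith : (0:ℝ) ≤ M)) (sq_nonneg t)]
      have hC10 : C * M * x^2 ≤ 1/10 := by linarith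
      have hgb := hgC ((t - x) / hh k)
      have habs : ∀ a b c : ℝ, |a * b * c| = |a| * |b| * |c| := fun a b c => by
        rw [abs_mul, abs_mul]
      have key0 : |Gv d k t| ≤ C * M * x^2 := by
        rw [Gv, ← hx, habs]
        calc |d k| * |hh k| * |g ((t - x)/hh k)| ≤ (M * x^5) * (x^3/100) * C := by
              apply mul_le_mul (mul_le_mul hd (by rw [abs_of_pos hhp, hhval]) (abs_nonneg _)
                (by positivity)) hgb.1 (abs_nonneg _) (by positivity)
          _ = (C * M * x^2) * (x^6/100) := by ring
          _ ≤ (C * M * x^2) * 1 := mul_le_mul_of_nonneg_left (by linarith) hCMx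
          _ = C * M * x^2 := mul_one _
      have key1 : |G1v d k t| ≤ C * M * x^2 := by
        rw [G1v, ← hx, abs_mul]
        calc |d k| * |g1 ((t - x)/hh k)| ≤ (M * x^5) * C :=
              mul_le_mul hd hgb.2.1 (abs_nonneg _) (by positivity)
          _ = (C * M * x^2) * (x^3) := by ring
          _ ≤ (C * M * x^2) * 1 := mul_le_mul_of_nonneg_left (by linarith) hCMx
          _ = C * M * x^2 := mul_one _
      have key2 : |G2v d k t| ≤ 100 * (C * M * x^2) := by
        rw [G2v, ← hx, abs_mul, abs_div]
        have hdd : |d k| / |hh k| ≤ 100 * M * x^2 := by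
          rw [abs_of_pos hhp, hhval, div_le_iff₀ (by positivity)]
          calc |d k| ≤ M * x^5 := hd
            _ = 100 * M * x^2 * (x^3/100) := by ring
        calc |d k| / |hh k| * |g2 ((t - x)/hh k)| ≤ (100 * M * x^2) * C :=
              mul_le_mul hdd hgb.2.2 (abs_nonneg _) (by positivity)
          _ = 100 * (C * M * x^2) := by ring
      have h100B : 100 * (C * M * x^2) ≤ 400*C*M*t^2 := by
        have h1 : 100 * (C * M * x^2) ≤ 100 * (C * M * (4*t^2)) := by
          apply mul_le_mul_of_nonneg_left _ (by norm_num)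
          exact mul_le_mul_of_nonneg_left hx2t (by positivity)
        have e : 100 * (C * M * (4*t^2)) = 400*(C*(M*t^2)) := by ring
        have e2 : 400*C*M*t^2 = 400*(C*(M*t^2)) := by ring
        rw [e2]
        linarith
      have h100C : 100 * (C * M * x^2) ≤ 1/10 := by linarith
      rw [ff, ff1, ff2, ← hk]
      exact ⟨⟨le_trans key0 hB, le_trans key0 hC10⟩,
        ⟨le_trans key1 hB, le_trans key1 hC10⟩,
        le_trans key2 h100B, le_trans key2 h100C⟩

end main

theorem hasDerivAt_of_quadratic {F : ℝ → ℝ} {K : ℝ} (h0 : F 0 = 0)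
    (hb : ∀ t, |F t| ≤ K * t^2) : HasDerivAt F 0 0 := by
  have hK : 0 ≤ K := by have h := hb 1; have := abs_nonneg (F 1); nlinarith
  rw [hasDerivAt_iff_isLittleO, Asymptotics.isLittleO_iff]
  intro c hc
  have hball : Metric.ball (0:ℝ) (c/(K+1)) ∈ nhds (0:ℝ) :=
    Metric.ball_mem_nhds _ (by positivity)
  filter_upwards [hball] with x hx
  have hx' : |x| < c/(K+1) := by simpa [Real.dist_eq] using hx
  have h3 : |x| * (K+1) ≤ c := by
    rw [← le_div_iff₀ (by positivity : (0:ℝ) < K+1)]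
    exact hx'.le
  have h4 : |x| * |x| * (K+1) ≤ c * |x| :=
    (mul_le_mul_of_nonneg_right h3 (abs_nonneg x)).trans_eq (by ring) |>.trans_eq' (by ring)
  have h5 : |F x| ≤ K * (|x| * |x|) := by
    rw [abs_mul_abs_self]
    simpa [sq] using hb x
  simp only [h0, sub_zero, smul_zero, Real.norm_eq_abs]
  nlinarith [abs_nonneg x, abs_nonneg (F x)]

section main2
variable {d : ℕ → ℝ} {k₀ : ℕ} {C M : ℝ}

variable (hd0 : ∀ k, d k ≠ 0 → k₀ ≤ k) (hk₀ : 2 ≤ k₀)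
  (hC1 : 1 ≤ C) (hM : 1 ≤ M)
  (hgC : ∀ x, |g x| ≤ C ∧ |g1 x| ≤ C ∧ |g2 x| ≤ C)
  (hdM : ∀ k, |d k| ≤ M * (xi k)^5)
  (hk₀big : 1000 * C * M ≤ (k₀:ℕ))

include hd0 hk₀ hC1 hM hgC hdM hk₀big

theorem hasDerivAt_ff : ∀ t, HasDerivAt (ff d) (ff1 d t) t := by
  intro t
  by_cases ht : t = 0
  · subst ht
    rw [(ff_zero_at_zero hd0 hk₀).2.1]
    exact hasDerivAt_of_quadratic (ff_zero_at_zero hd0 hk₀).1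
      (fun t => (ff_bounds hd0 hk₀ hC1 hM hgC hdM hk₀big t).1.1)
  · have hm := model hd0 hk₀ ht
    have hG := (hasDerivAt_Gv hd0 hk₀ (nn t) t).1
    exact hG.congr_of_eventuallyEq (hm.mono fun t' h => h.1)

theorem hasDerivAt_ff1 : ∀ t, HasDerivAt (ff1 d) (ff2 d t) t := by
  intro t
  by_cases ht : t = 0
  · subst ht
    rw [(ff_zero_at_zero hd0 hk₀).2.2]
    exact hasDerivAt_of_quadratic (ff_zero_at_zero hd0 hk₀).2.1
      (fun t => (ff_bounds hd0 hk₀ hC1 hM hgC hdM hk₀big t).2.1.1)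
  · have hm := model hd0 hk₀ ht
    have hG := (hasDerivAt_Gv hd0 hk₀ (nn t) t).2.1
    exact hG.congr_of_eventuallyEq (hm.mono fun t' h => h.2.1)

theorem continuous_ff2 : Continuous (ff2 d) := by
  rw [continuous_iff_continuousAt]
  intro t
  by_cases ht : t = 0
  · subst ht
    rw [ContinuousAt, (ff_zero_at_zero hd0 hk₀).2.2]
    apply squeeze_zero_norm (fun t => (ff_bounds hd0 hk₀ hC1 hM hgC hdM hk₀big t).2.2.1)
    have : Tendsto (fun t : ℝ => 400*C*M*t^2) (nhds 0) (nhds (400*C*M*0^2)) := by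
      apply Continuous.tendsto
      continuity
    simpa using this
  · have hm := model hd0 hk₀ ht
    have hG := (hasDerivAt_Gv hd0 hk₀ (nn t) t).2.2
    have heq : ff2 d =ᶠ[nhds t] G2v d (nn t) := hm.mono fun t' h => h.2.2
    exact hG.continuousAt.congr heq.symm

-- ### periodization
end main2

def FF (d : ℕ → ℝ) (s : ℝ) : ℝ := ff d (s - 2*π*(⌊s/(2*π)⌋:ℝ))
def FF1 (d : ℕ → ℝ) (s : ℝ) : ℝ := ff1 d (s - 2*π*(⌊s/(2*π)⌋:ℝ))
def FF2 (d : ℕ → ℝ) (s : ℝ) : ℝ := ff2 d (s - 2*π*(⌊s/(2*π)⌋:ℝ))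

section main3
variable {d : ℕ → ℝ} {k₀ : ℕ} {C M : ℝ}

variable (hd0 : ∀ k, d k ≠ 0 → k₀ ≤ k) (hk₀ : 2 ≤ k₀)
  (hC1 : 1 ≤ C) (hM : 1 ≤ M)
  (hgC : ∀ x, |g x| ≤ C ∧ |g1 x| ≤ C ∧ |g2 x| ≤ C)
  (hdM : ∀ k, |d k| ≤ M * (xi k)^5)
  (hk₀big : 1000 * C * M ≤ (k₀:ℕ))

include hd0 hk₀ hC1 hM hgC hdM hk₀big

theorem model2 (s : ℝ) :
    ∀ᶠ t in nhds s, FF d t = ff d (t - 2*π*(⌊s/(2*π)⌋:ℝ)) ∧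
      FF1 d t = ff1 d (t - 2*π*(⌊s/(2*π)⌋:ℝ)) ∧ FF2 d t = ff2 d (t - 2*π*(⌊s/(2*π)⌋:ℝ)) := by
  set m := ⌊s/(2*π)⌋ with hm
  have hπ : (0:ℝ) < 2*π := by positivity
  have h3 : (3:ℝ) < π := Real.pi_gt_three
  have hs1 : 2*π*(m:ℝ) ≤ s := by
    have h := Int.floor_le (s/(2*π))
    rw [← hm] at h
    have := (le_div_iff₀ hπ).1 h
    linarith
  have hs2 : s < 2*π*((m:ℝ)+1) := by
    have h := Int.lt_floor_add_one (s/(2*π))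
    rw [← hm] at h
    have := (div_lt_iff₀ hπ).1 h
    push_cast at this ⊢
    linarith
  have hε : 0 < min (2*π*((m:ℝ)+1) - s) 1 := lt_min (by linarith) one_pos
  filter_upwards [Metric.ball_mem_nhds s hε] with t ht
  have ht' : |t - s| < min (2*π*((m:ℝ)+1) - s) 1 := by
    have := Metric.mem_ball.1 ht
    rw [Real.dist_eq] at this
    exact this
  obtain ⟨htA, htB⟩ := abs_lt.1 ht'
  have hmin1 : min (2*π*((m:ℝ)+1) - s) 1 ≤ 2*π*((m:ℝ)+1) - s := min_le_left _ _
  have hmin2 : min (2*π*((m:ℝ)+1) - s) (1:ℝ) ≤ 1 := min_le_right _ _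
  have htu : t < 2*π*((m:ℝ)+1) := by linarith
  have htl : 2*π*(m:ℝ) - 1 < t := by linarith
  by_cases hc : 2*π*(m:ℝ) ≤ t
  · have hfl : ⌊t/(2*π)⌋ = m := by
      rw [Int.floor_eq_iff]
      constructor
      · rw [le_div_iff₀ hπ]; linarith
      · rw [div_lt_iff₀ hπ]; push_cast; linarith
    rw [FF, FF1, FF2, hfl]
    exact ⟨rfl, rfl, rfl⟩
  · push_neg at hc
    have hfl : ⌊t/(2*π)⌋ = m - 1 := by
      rw [Int.floor_eq_iff]
      constructor
      · rw [le_div_iff₀ hπ]; push_cast; nlinarith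
      · rw [div_lt_iff₀ hπ]; push_cast; nlinarith
    rw [FF, FF1, FF2, hfl]
    have hcast : ((m - 1 : ℤ) : ℝ) = (m:ℝ) - 1 := by push_cast; ring
    rw [hcast]
    have harg1 : (1:ℝ) ≤ t - 2*π*((m:ℝ)-1) := by nlinarith
    have hz1 := ff_zero_of_one_le hd0 hk₀ harg1
    have harg2 : t - 2*π*(m:ℝ) ≤ 0 := by linarith
    have hz2 := ff_zero_of_nonpos hd0 hk₀ harg2
    rw [hz1.1, hz1.2.1, hz1.2.2, hz2.1, hz2.2.1, hz2.2.2]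
    exact ⟨rfl, rfl, rfl⟩

omit hd0 hk₀ hC1 hM hgC hdM hk₀big in
theorem periodic_FF : Function.Periodic (FF d) (2*π) := by
  intro s
  have hπ : (0:ℝ) < 2*π := by positivity
  have hdiv : (s + 2*π)/(2*π) = s/(2*π) + 1 := by field_simp
  have hfl : ⌊(s + 2*π)/(2*π)⌋ = ⌊s/(2*π)⌋ + 1 := by rw [hdiv, Int.floor_add_one]
  rw [FF, FF, hfl]
  congr 1
  push_cast
  ring

theorem hasDerivAt_FF : ∀ s, HasDerivAt (FF d) (FF1 d s) s := by
  intro s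
  have hm2 := model2 hd0 hk₀ hC1 hM hgC hdM hk₀big s
  have hsub : HasDerivAt (fun t : ℝ => t - 2*π*(⌊s/(2*π)⌋:ℝ)) 1 s := by
    simpa using (hasDerivAt_id s).sub_const (2*π*(⌊s/(2*π)⌋:ℝ))
  have hc := (hasDerivAt_ff hd0 hk₀ hC1 hM hgC hdM hk₀big
    (s - 2*π*(⌊s/(2*π)⌋:ℝ))).comp s hsub
  rw [mul_one] at hc
  exact hc.congr_of_eventuallyEq (hm2.mono fun t h => h.1)

theorem hasDerivAt_FF1 : ∀ s, HasDerivAt (FF1 d) (FF2 d s) s := by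
  intro s
  have hm2 := model2 hd0 hk₀ hC1 hM hgC hdM hk₀big s
  have hsub : HasDerivAt (fun t : ℝ => t - 2*π*(⌊s/(2*π)⌋:ℝ)) 1 s := by
    simpa using (hasDerivAt_id s).sub_const (2*π*(⌊s/(2*π)⌋:ℝ))
  have hc := (hasDerivAt_ff1 hd0 hk₀ hC1 hM hgC hdM hk₀big
    (s - 2*π*(⌊s/(2*π)⌋:ℝ))).comp s hsub
  rw [mul_one] at hc
  exact hc.congr_of_eventuallyEq (hm2.mono fun t h => h.2.1)

theorem continuous_FF2 : Continuous (FF2 d) := by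
  rw [continuous_iff_continuousAt]
  intro s
  have hm2 := model2 hd0 hk₀ hC1 hM hgC hdM hk₀big s
  have hcont : ContinuousAt (fun t : ℝ => ff2 d (t - 2*π*(⌊s/(2*π)⌋:ℝ))) s :=
    ((continuous_ff2 hd0 hk₀ hC1 hM hgC hdM hk₀big).comp
      (continuous_id.sub continuous_const)).continuousAt
  have heq : FF2 d =ᶠ[nhds s] (fun t => ff2 d (t - 2*π*(⌊s/(2*π)⌋:ℝ))) :=
    hm2.mono fun t h => h.2.2
  exact hcont.congr heq.symm

theorem contDiff_FF : ContDiff ℝ 2 (FF d) := by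
  have hD : Differentiable ℝ (FF d) :=
    fun s => (hasDerivAt_FF hd0 hk₀ hC1 hM hgC hdM hk₀big s).differentiableAt
  have hder : deriv (FF d) = FF1 d :=
    funext fun s => (hasDerivAt_FF hd0 hk₀ hC1 hM hgC hdM hk₀big s).deriv
  have hD1 : Differentiable ℝ (FF1 d) :=
    fun s => (hasDerivAt_FF1 hd0 hk₀ hC1 hM hgC hdM hk₀big s).differentiableAt
  have hder1 : deriv (FF1 d) = FF2 d :=
    funext fun s => (hasDerivAt_FF1 hd0 hk₀ hC1 hM hgC hdM hk₀big s).deriv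
  rw [show (2 : WithTop ℕ∞) = 1 + 1 by norm_num]
  refine contDiff_succ_iff_deriv.2 ⟨hD, by simp, ?_⟩
  rw [hder]
  refine contDiff_one_iff_deriv.2 ⟨hD1, ?_⟩
  rw [hder1]
  exact continuous_FF2 hd0 hk₀ hC1 hM hgC hdM hk₀big

theorem FF_bounds (s : ℝ) : |FF d s| ≤ 1/10 ∧ |FF1 d s| ≤ 1/10 ∧ |FF2 d s| ≤ 1/10 := by
  have h := ff_bounds hd0 hk₀ hC1 hM hgC hdM hk₀big (s - 2*π*(⌊s/(2*π)⌋:ℝ))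
  exact ⟨h.1.2, h.2.1.2, h.2.2.2⟩

end main3

section values
variable {d : ℕ → ℝ} {k₀ : ℕ}

theorem floor_xi_zero {k : ℕ} (hk : 1 ≤ k) : ⌊xi k/(2*π)⌋ = 0 := by
  have h3 : (3:ℝ) < π := Real.pi_gt_three
  have h1 := xi_pos hk
  have h2 := xi_le_one hk
  rw [Int.floor_eq_zero_iff, Set.mem_Ico]
  constructor
  · positivity
  · rw [div_lt_one (by positivity : (0:ℝ) < 2*π)]
    linarith

theorem FF_at_xi {k : ℕ} (hk : 1 ≤ k) : FF d (xi k) = 0 ∧ FF1 d (xi k) = d k := by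
  have hfl := floor_xi_zero (k := k) hk
  have harg : xi k - 2*π*((0:ℤ):ℝ) = xi k := by push_cast; ring
  constructor
  · rw [FF, hfl, harg, ff, nn_xi hk, Gv]
    simp [g_zero]
  · rw [FF1, hfl, harg, ff1, nn_xi hk, G1v]
    simp [g1_zero]

end values
end Halpern13

open Halpern13 in
/-- **Halpern's lemma.** Let `q_k = (cos ξ_k, sin ξ_k)` with `ξ_k = k^{-1/2}`, and let unit
vectors `w_k` at `q_k` make oriented angles `σ_k` with the inward normals `z_k = −q_k` of the
unit circle, with `|σ_k| = b_k k^{-5/2}` and `b_k → b > 0`. Then there are `k₀ > 0` and a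
`2π`-periodic positive `C²` function `ρ` whose polar curve `γ(ξ) = ρ(ξ)(cos ξ, sin ξ)` has
everywhere positive curvature (hence is strictly convex), passes through `q_k` for all
`k ≥ k₀` (i.e. `ρ(ξ_k) = 1`), and has inward unit normal `w_k` at `q_k` for all `k ≥ k₀`. -/
theorem stmt_13 (ξ : ℕ → ℝ) (hξ : ∀ k : ℕ, ξ k = (k : ℝ) ^ (-(1 : ℝ) / 2))
    (w : ℕ → ℝ × ℝ) (σ : ℕ → ℝ) (b : ℝ) (hb : 0 < b)
    -- `w k = cos σ_k • z_k + sin σ_k • z̃_k`, where `z_k = −q_k` and `z̃_k` is `z_k`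
    -- rotated counterclockwise by `π/2`
    (hw : ∀ k : ℕ, 1 ≤ k → w k =
      (Real.cos (σ k) * (-Real.cos (ξ k)) + Real.sin (σ k) * Real.sin (ξ k),
       Real.cos (σ k) * (-Real.sin (ξ k)) + Real.sin (σ k) * (-Real.cos (ξ k))))
    -- `|σ_k| = b_k k^{-5/2}` with `b_k → b`
    (hσ : Tendsto (fun k : ℕ => (k : ℝ) ^ ((5 : ℝ) / 2) * |σ k|) atTop (nhds b)) :
    ∃ k₀ : ℕ, 0 < k₀ ∧ ∃ ρ : ℝ → ℝ,
      Function.Periodic ρ (2 * π) ∧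
      (∀ s : ℝ, 0 < ρ s) ∧
      ContDiff ℝ 2 ρ ∧
      -- everywhere positive curvature of the curve `r = ρ(ξ)`
      (∀ s : ℝ, 0 < (ρ s) ^ 2 + 2 * (deriv ρ s) ^ 2 - ρ s * deriv (deriv ρ) s) ∧
      ∀ k : ℕ, k₀ ≤ k →
        ρ (ξ k) = 1 ∧
        w k = (Real.sqrt ((ρ (ξ k)) ^ 2 + (deriv ρ (ξ k)) ^ 2))⁻¹ •
          (-(deriv (fun s : ℝ => ρ s * Real.sin s) (ξ k)),
            deriv (fun s : ℝ => ρ s * Real.cos s) (ξ k)) := by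
  classical
  obtain ⟨C, hC1, hgC⟩ := Halpern13.exists_bound
  set M : ℝ := 2*b + 4 with hM_def
  have hM : 1 ≤ M := by simp only [hM_def]; linarith
  have hev : ∀ᶠ k : ℕ in atTop, (k:ℝ)^((5:ℝ)/2) * |σ k| < b + 1 :=
    hσ.eventually_lt_const (by linarith)
  obtain ⟨N, hN⟩ := eventually_atTop.1 hev
  have hCM0 : (0:ℝ) < 1000*C*M := by positivity
  set k₀ : ℕ := max (max 2 N) (⌈1000*C*M + b⌉₊ + 2) with hk₀_def
  have hk₀2 : 2 ≤ k₀ := le_trans (le_max_left 2 N) (le_max_left _ _)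
  have hk₀N : N ≤ k₀ := le_trans (le_max_right 2 N) (le_max_left _ _)
  have hk₀all : 1000*C*M + b + 2 ≤ (k₀:ℝ) := by
    have h1 : (⌈1000*C*M + b⌉₊ + 2 : ℕ) ≤ k₀ := le_max_right _ _
    have h2 : 1000*C*M + b ≤ (⌈1000*C*M + b⌉₊:ℝ) := Nat.le_ceil _
    have h3 : ((⌈1000*C*M + b⌉₊ + 2 : ℕ):ℝ) ≤ (k₀:ℝ) := by exact_mod_cast h1
    push_cast at h3
    linarith
  have hk₀big : 1000*C*M ≤ (k₀:ℝ) := by linarith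
  set d : ℕ → ℝ := fun k => if k₀ ≤ k then -Real.tan (σ k) else 0 with hd_def
  have hd0 : ∀ k, d k ≠ 0 → k₀ ≤ k := by
    intro k h
    by_contra hc
    simp only [hd_def, if_neg hc] at h
    exact h rfl
  -- per-k facts
  have key : ∀ k, k₀ ≤ k → |σ k| ≤ 1 ∧ (0:ℝ) < Real.cos (σ k) ∧ (1:ℝ)/2 ≤ Real.cos (σ k) ∧
      |d k| ≤ M * (xi k)^5 := by
    intro k hk
    have hk1 : 1 ≤ k := by omega
    have hxp := xi_pos hk1
    have hxle := xi_le_one hk1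
    have hxk := xi_sq hk1
    have hsk : (0:ℝ) < Real.sqrt k := Real.sqrt_pos.2 (by exact_mod_cast (by omega : 0 < k))
    have hpow : (k:ℝ)^((5:ℝ)/2) * (xi k)^5 = 1 := by
      have h1 : (k:ℝ)^((5:ℝ)/2) = (Real.sqrt k)^5 := by
        rw [Real.sqrt_eq_rpow, ← Real.rpow_natCast ((k:ℝ)^((1:ℝ)/(2:ℝ))) 5,
          ← Real.rpow_mul (Nat.cast_nonneg k)]
        norm_num
      rw [h1, xi, ← mul_pow, mul_inv_cancel₀ hsk.ne', one_pow]
    have hNk := (hN k (le_trans hk₀N hk)).le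
    have hσle : |σ k| ≤ (b+1) * (xi k)^5 := by
      have e : |σ k| = ((k:ℝ)^((5:ℝ)/2) * |σ k|) * (xi k)^5 := by
        rw [mul_comm ((k:ℝ)^((5:ℝ)/2)) (|σ k|), mul_assoc, hpow, mul_one]
      rw [e]
      exact mul_le_mul_of_nonneg_right hNk (by positivity)
    have hx5le2 : (xi k)^5 ≤ (xi k)^2 := by
      have hx3le1 : (xi k)^3 ≤ 1 := pow_le_one₀ hxp.le hxle
      calc (xi k)^5 = (xi k)^2 * (xi k)^3 := by ring
        _ ≤ (xi k)^2 * 1 := mul_le_mul_of_nonneg_left hx3le1 (by positivity)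
        _ = (xi k)^2 := mul_one _
    have hbk : (b+1) * (xi k)^2 ≤ 1 := by
      have hbk' : b + 1 ≤ (k:ℝ) := by
        have : (k₀:ℝ) ≤ (k:ℝ) := by exact_mod_cast hk
        linarith
      calc (b+1) * (xi k)^2 ≤ (k:ℝ) * (xi k)^2 :=
            mul_le_mul_of_nonneg_right hbk' (by positivity)
        _ = 1 := hxk
    have hσ1 : |σ k| ≤ 1 := by
      calc |σ k| ≤ (b+1) * (xi k)^5 := hσle
        _ ≤ (b+1) * (xi k)^2 := mul_le_mul_of_nonneg_left hx5le2 (by linarith)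
        _ ≤ 1 := hbk
    have hcos : (1:ℝ)/2 ≤ Real.cos (σ k) := by
      have h := Real.one_sub_sq_div_two_le_cos (x := σ k)
      have habs2 : |σ k|^2 ≤ 1 := by nlinarith [abs_nonneg (σ k)]
      have := sq_abs (σ k)
      linarith
    have hcos0 : (0:ℝ) < Real.cos (σ k) := by linarith
    have htan : |Real.tan (σ k)| ≤ 2 * |σ k| := by
      rw [Real.tan_eq_sin_div_cos, abs_div, abs_of_pos hcos0, div_le_iff₀ hcos0]
      nlinarith [Real.abs_sin_le_abs (x := σ k), abs_nonneg (σ k)]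
    refine ⟨hσ1, hcos0, hcos, ?_⟩
    rw [hd_def]
    simp only [if_pos hk, abs_neg]
    calc |Real.tan (σ k)| ≤ 2 * |σ k| := htan
      _ ≤ 2 * ((b+1) * (xi k)^5) := by linarith [hσle, abs_nonneg (σ k)]
      _ ≤ M * (xi k)^5 := by rw [hM_def]; nlinarith [pow_nonneg hxp.le 5]
  have hdM : ∀ k, |d k| ≤ M * (xi k)^5 := by
    intro k
    by_cases hk : k₀ ≤ k
    · exact (key k hk).2.2.2
    · rw [hd_def]
      simp only [if_neg hk, abs_zero]
      have : (0:ℝ) ≤ xi k := by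
        rw [xi]; positivity
      positivity
  have hk₀bigN : 1000 * C * M ≤ ((k₀:ℕ):ℝ) := hk₀big
  -- the radial function
  have hasρ : ∀ s, HasDerivAt (fun s => 1 + FF d s) (FF1 d s) s := fun s =>
    (hasDerivAt_FF hd0 hk₀2 hC1 hM hgC hdM hk₀bigN s).const_add 1
  have hderρ : deriv (fun s => 1 + FF d s) = FF1 d := funext fun s => (hasρ s).deriv
  have hderρ2 : deriv (deriv (fun s => 1 + FF d s)) = FF2 d := by
    rw [hderρ]
    exact funext fun s => (hasDerivAt_FF1 hd0 hk₀2 hC1 hM hgC hdM hk₀bigN s).deriv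
  refine ⟨k₀, by omega, fun s => 1 + FF d s, ?_, ?_, ?_, ?_, ?_⟩
  · intro s
    simp only []
    rw [periodic_FF (d := d) s]
  · intro s
    have h := (FF_bounds hd0 hk₀2 hC1 hM hgC hdM hk₀bigN s).1
    have := abs_le.1 h
    simp only []
    linarith [this.1]
  · exact contDiff_const.add (contDiff_FF hd0 hk₀2 hC1 hM hgC hdM hk₀bigN)
  · intro s
    rw [hderρ2, hderρ]
    obtain ⟨h0, h1, h2⟩ := FF_bounds hd0 hk₀2 hC1 hM hgC hdM hk₀bigN s
    obtain ⟨h0a, h0b⟩ := abs_le.1 h0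
    obtain ⟨h2a, h2b⟩ := abs_le.1 h2
    show 0 < (1 + FF d s)^2 + 2*(FF1 d s)^2 - (1 + FF d s)*(FF2 d s)
    nlinarith [sq_nonneg (FF1 d s)]
  · intro k hk
    have hk1 : (1:ℕ) ≤ k := by omega
    obtain ⟨hσ1, hcos0, hcos, _⟩ := key k hk
    have hxi_eq : ξ k = xi k := by
      rw [hξ k, xi, Real.sqrt_eq_rpow, show -(1:ℝ)/2 = -(1/2) by norm_num,
        Real.rpow_neg (Nat.cast_nonneg k)]
    have hFF0 := (FF_at_xi (d := d) hk1).1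
    have hFF1 := (FF_at_xi (d := d) hk1).2
    have hd_k : d k = -Real.tan (σ k) := by rw [hd_def]; simp only [if_pos hk]
    have hval : (fun s => 1 + FF d s) (ξ k) = 1 := by
      simp only []
      rw [hxi_eq, hFF0, add_zero]
    have hρ'val : deriv (fun s => 1 + FF d s) (ξ k) = -Real.tan (σ k) := by
      rw [hderρ, hxi_eq, hFF1, hd_k]
    have hasρξ : HasDerivAt (fun s => 1 + FF d s) (-Real.tan (σ k)) (ξ k) := by
      have h := hasρ (ξ k)
      rw [hxi_eq] at h ⊢
      rwa [hFF1, hd_k] at h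
    refine ⟨hval, ?_⟩
    have hsin : deriv (fun s : ℝ => (1 + FF d s) * Real.sin s) (ξ k)
        = -Real.tan (σ k) * Real.sin (ξ k) + 1 * Real.cos (ξ k) := by
      have h := (hasρξ.mul (Real.hasDerivAt_sin (ξ k))).deriv
      rw [show (fun s : ℝ => (1 + FF d s) * Real.sin s) = (fun s => 1 + FF d s) * Real.sin from rfl, h]
      have : (1 + FF d (ξ k)) = 1 := hval
      rw [this]
    have hcosd : deriv (fun s : ℝ => (1 + FF d s) * Real.cos s) (ξ k)
        = -Real.tan (σ k) * Real.cos (ξ k) + 1 * (-Real.sin (ξ k)) := by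
      have h := (hasρξ.mul (Real.hasDerivAt_cos (ξ k))).deriv
      rw [show (fun s : ℝ => (1 + FF d s) * Real.cos s) = (fun s => 1 + FF d s) * Real.cos from rfl, h]
      have : (1 + FF d (ξ k)) = 1 := hval
      rw [this]
    have hsqrt : (Real.sqrt (((fun s => 1 + FF d s) (ξ k))^2
        + (deriv (fun s => 1 + FF d s) (ξ k))^2))⁻¹ = Real.cos (σ k) := by
      rw [hval, hρ'val, show (1:ℝ)^2 + (-Real.tan (σ k))^2 = 1 + Real.tan (σ k)^2 by ring]
      exact Real.inv_sqrt_one_add_tan_sq hcos0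
    rw [hw k hk1, hsqrt, hsin, hcosd]
    have hcosne : Real.cos (σ k) ≠ 0 := hcos0.ne'
    rw [Prod.ext_iff]
    constructor
    · simp only [Prod.smul_fst, smul_eq_mul]
      field_simp [Real.tan_eq_sin_div_cos]
      have ht : Real.cos (σ k) * Real.tan (σ k) = Real.sin (σ k) := by
        rw [Real.tan_eq_sin_div_cos]; field_simp
      linear_combination (-Real.sin (ξ k)) * ht
    · simp only [Prod.smul_snd, smul_eq_mul]
      field_simp [Real.tan_eq_sin_div_cos]
      have ht : Real.cos (σ k) * Real.tan (σ k) = Real.sin (σ k) := by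
        rw [Real.tan_eq_sin_div_cos]; field_simp
      linear_combination (Real.cos (ξ k)) * ht
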